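/- Let G be a group with involution α, (K, J) a Krein space, π a J-unitary representation of G on K with each π(g) bounded, and V : H → K a bounded linear operator such that the closed span of {π(g)Vξ : g ∈ G, ξ ∈ H} equals K and J π(g) V = π(α(g)) V for all g ∈ G. Then the map φ : G → L(H) defined by φ(g) = V* π(g) V is an α-completely positive map. -/

import Mathlib

open scoped ComplexOrder

noncomputable section

def IsInvolution (G : Type*) [Group G] (α : G → G) : Prop :=
  (∀ g, α (α g) = g) ∧ α 1 = 1 ∧ ∀ g : G, α g⁻¹ = (α g)⁻¹

def IsAlphaCP {G : Type*} [Group G] (α : G → G)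
    {H : Type*} [NormedAddCommGroup H] [InnerProductSpace ℂ H] [CompleteSpace H]
    (φ : G → H →L[ℂ] H) : Prop :=
  (∀ g₁ g₂ : G, φ (α g₁ * α g₂) = φ (α (g₁ * g₂)) ∧ φ (α (g₁ * g₂)) = φ (g₁ * g₂)) ∧
  (∀ (n : ℕ) (g : Fin n → G) (ξ : Fin n → H),
    0 ≤ ∑ i, ∑ j, (inner ℂ (φ ((α (g i))⁻¹ * g j) (ξ j)) (ξ i) : ℂ)) ∧
  (∃ K > (0 : ℝ), ∀ (n : ℕ) (g : Fin n → G) (ξ : Fin n → H),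
    ∑ i, ∑ j, (inner ℂ (((ContinuousLinearMap.adjoint (φ (g i))) ∘L φ (g j)) (ξ j)) (ξ i) : ℂ) ≤
      (K : ℂ) * ∑ i, ∑ j, (inner ℂ (φ ((α (g i))⁻¹ * g j) (ξ j)) (ξ i) : ℂ)) ∧
  (∀ g : G, ∃ M > (0 : ℝ), ∀ (n : ℕ) (gs : Fin n → G) (ξ : Fin n → H),
    ∑ i, ∑ j, (inner ℂ (φ ((α (g * gs i))⁻¹ * (g * gs j)) (ξ j)) (ξ i) : ℂ) ≤
      (M : ℂ) * ∑ i, ∑ j, (inner ℂ (φ ((α (gs i))⁻¹ * gs j) (ξ j)) (ξ i) : ℂ))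

set_option maxHeartbeats 1000000 in
open ContinuousLinearMap in
theorem alphaCP_of_krein_rep {G : Type*} [Group G] (α : G → G)
    {H : Type*} [NormedAddCommGroup H] [InnerProductSpace ℂ H] [CompleteSpace H]
    {K : Type*} [NormedAddCommGroup K] [InnerProductSpace ℂ K] [CompleteSpace K]
    (hα : IsInvolution G α)
    (J : K →L[ℂ] K) (hJsa : adjoint J = J) (hJinv : J ∘L J = 1)
    (π : G → K →L[ℂ] K) (hπ1 : π 1 = 1) (hπmul : ∀ g g', π (g * g') = π g ∘L π g')
    (hπJ : ∀ g : G, π g⁻¹ = J ∘L adjoint (π g) ∘L J)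
    (V : H →L[ℂ] K)
    (hmin : (Submodule.span ℂ {x : K | ∃ g ξ, x = π g (V ξ)}).topologicalClosure = ⊤)
    (hcomm : ∀ g : G, J ∘L π g ∘L V = π (α g) ∘L V) :
    IsAlphaCP α (fun g => adjoint V ∘L π g ∘L V) := by
  obtain ⟨hα1, hα2, hα3⟩ := hα
  have hJV : ∀ ξ : H, J (V ξ) = V ξ := by
    intro ξ
    have h := hcomm 1
    rw [hα2, hπ1] at h
    simpa using congrArg (fun T => T ξ) h
  have hJVc : J ∘L V = V := by
    have h := hcomm 1
    rw [hα2, hπ1] at h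
    ext ξ; simpa using congrArg (fun T => T ξ) h
  have hVJ : adjoint V ∘L J = adjoint V := by
    have h := congrArg adjoint hJVc
    rwa [adjoint_comp, hJsa] at h
  have hJ2 : ∀ x : K, J (J x) = x := by
    intro x; simpa using congrArg (fun T => T x) hJinv
  have hJsym : ∀ x y : K, (inner ℂ (J x) y : ℂ) = inner ℂ x (J y) := by
    intro x y
    conv_lhs => rw [← hJsa]
    exact adjoint_inner_left J y x
  have hπαV : ∀ (g : G) (ξ : H), π (α g) (V ξ) = J (π g (V ξ)) := by
    intro g ξ
    simpa using (congrArg (fun T => T ξ) (hcomm g)).symm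
  have key : ∀ (g g' : G) (ξ η : H),
      (inner ℂ ((adjoint V ∘L π ((α g)⁻¹ * g') ∘L V) ξ) η : ℂ)
        = inner ℂ (π g' (V ξ)) (π g (V η)) := by
    intro g g' ξ η
    have h1 : ((adjoint V ∘L π ((α g)⁻¹ * g') ∘L V) ξ)
        = adjoint V (J (adjoint (π (α g)) (J (π g' (V ξ))))) := by
      simp [hπmul, hπJ (α g)]
    rw [h1, adjoint_inner_left, hJsym, hJV, adjoint_inner_left, hπαV, hJsym, hJ2]
  have sumkey : ∀ (n : ℕ) (g : Fin n → G) (ξ : Fin n → H),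
      ∑ i, ∑ j, (inner ℂ ((adjoint V ∘L π ((α (g i))⁻¹ * g j) ∘L V) (ξ j)) (ξ i) : ℂ)
        = inner ℂ (∑ i, π (g i) (V (ξ i))) (∑ i, π (g i) (V (ξ i))) := by
    intro n g ξ
    simp_rw [key, ← sum_inner]
    rw [← inner_sum]
  have cast_ineq : ∀ (a b : ℝ), a ≤ b → (a : ℂ) ≤ (b : ℂ) := fun a b h => by
    exact_mod_cast h
  refine ⟨?_, ?_, ?_, ?_⟩
  · -- the φ(α g₁ * α g₂) = φ(α (g₁ g₂)) = φ(g₁ g₂) conditions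
    intro g₁ g₂
    have hadjπα : ∀ (h : G) (η : H),
        adjoint (π (α h)) (V η) = J (adjoint (π h) (V η)) := by
      intro h η
      have h1 : adjoint (π (α h)) = J ∘L π ((α h)⁻¹) ∘L J := by
        have := hπJ (α h)
        calc adjoint (π (α h))
            = (J ∘L J) ∘L adjoint (π (α h)) ∘L (J ∘L J) := by rw [hJinv]; ext x; simp
          _ = J ∘L (J ∘L adjoint (π (α h)) ∘L J) ∘L J := by ext x; simp
          _ = J ∘L π ((α h)⁻¹) ∘L J := by rw [← this]
      rw [h1]
      simp only [comp_apply]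
      rw [hJV, ← hα3, hπαV, hJ2, hπJ h]
      simp only [comp_apply]
      rw [hJV]
    have key2 : ∀ (h : G) (y : K) (η : H),
        (inner ℂ (π (α h) (J y)) (V η) : ℂ) = inner ℂ (π h y) (V η) := by
      intro h y η
      rw [← adjoint_inner_right, hadjπα, ← hJsym, hJ2, adjoint_inner_right]
    have hVαV : ∀ h : G, adjoint V ∘L π (α h) ∘L V = adjoint V ∘L π h ∘L V := by
      intro h
      ext ξ
      simp only [comp_apply]
      rw [hπαV, ← comp_apply (adjoint V) J, hVJ]
    have h2 : adjoint V ∘L π (α g₁ * α g₂) ∘L V = adjoint V ∘L π (g₁ * g₂) ∘L V := by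
      ext ξ
      refine ext_inner_right ℂ fun η => ?_
      simp only [comp_apply, hπmul]
      simp only [comp_apply, adjoint_inner_left]
      rw [hπαV g₂ ξ, key2]
    refine ⟨?_, ?_⟩
    · simp only [h2, hVαV (g₁ * g₂)]
    · simp only [hVαV (g₁ * g₂)]
  · intro n g ξ
    rw [sumkey n g ξ, inner_self_eq_norm_sq_to_K]
    have : (0:ℝ) ≤ ‖∑ i, π (g i) (V (ξ i))‖ ^ 2 := by positivity
    calc (0:ℂ) = ((0:ℝ):ℂ) := by norm_num
    _ ≤ ((‖∑ i, π (g i) (V (ξ i))‖ ^ 2 : ℝ) : ℂ) := cast_ineq _ _ this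
    _ = _ := by norm_cast
  · refine ⟨‖adjoint V‖ ^ 2 + 1, by positivity, fun n g ξ => ?_⟩
    obtain ⟨w, hw⟩ : ∃ w, w = ∑ i, π (g i) (V (ξ i)) := ⟨_, rfl⟩
    have hL : ∑ i, ∑ j, (inner ℂ ((adjoint ((fun g => adjoint V ∘L π g ∘L V) (g i)) ∘L
        ((fun g => adjoint V ∘L π g ∘L V) (g j))) (ξ j)) (ξ i) : ℂ)
        = inner ℂ (adjoint V w) (adjoint V w) := by
      simp only [comp_apply, adjoint_inner_left]
      simp_rw [← sum_inner, ← inner_sum]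
      simp [hw, map_sum]
    rw [hL, sumkey n g ξ, ← hw, inner_self_eq_norm_sq_to_K, inner_self_eq_norm_sq_to_K]
    have hre : ‖adjoint V w‖ ^ 2 ≤ (‖adjoint V‖ ^ 2 + 1) * ‖w‖ ^ 2 := by
      have h1 : ‖adjoint V w‖ ≤ ‖adjoint V‖ * ‖w‖ := (adjoint V).le_opNorm w
      nlinarith [norm_nonneg (adjoint V w), norm_nonneg w, norm_nonneg (adjoint V)]
    calc ((‖adjoint V w‖ : ℂ)) ^ 2 = ((‖adjoint V w‖ ^ 2 : ℝ) : ℂ) := by push_cast; ring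
    _ ≤ (((‖adjoint V‖ ^ 2 + 1) * ‖w‖ ^ 2 : ℝ) : ℂ) := cast_ineq _ _ hre
    _ = (((‖adjoint V‖ ^ 2 + 1 : ℝ)) : ℂ) * (‖w‖ : ℂ) ^ 2 := by push_cast; ring
  · intro g
    refine ⟨‖π g‖ ^ 2 + 1, by positivity, fun n gs ξ => ?_⟩
    obtain ⟨w, hw⟩ : ∃ w, w = ∑ i, π (gs i) (V (ξ i)) := ⟨_, rfl⟩
    have hπgw : ∑ i, π (g * gs i) (V (ξ i)) = π g w := by
      rw [hw, map_sum]
      exact Finset.sum_congr rfl fun i _ => by rw [hπmul]; rfl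
    rw [sumkey n (fun i => g * gs i) ξ, sumkey n gs ξ, hπgw, ← hw,
      inner_self_eq_norm_sq_to_K, inner_self_eq_norm_sq_to_K]
    have hre : ‖π g w‖ ^ 2 ≤ (‖π g‖ ^ 2 + 1) * ‖w‖ ^ 2 := by
      have h1 : ‖π g w‖ ≤ ‖π g‖ * ‖w‖ := (π g).le_opNorm w
      nlinarith [norm_nonneg (π g w), norm_nonneg w, norm_nonneg (π g)]
    calc ((‖π g w‖ : ℂ)) ^ 2 = ((‖π g w‖ ^ 2 : ℝ) : ℂ) := by push_cast; ring
    _ ≤ (((‖π g‖ ^ 2 + 1) * ‖w‖ ^ 2 : ℝ) : ℂ) := cast_ineq _ _ hre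
    _ = (((‖π g‖ ^ 2 + 1 : ℝ)) : ℂ) * (‖w‖ : ℂ) ^ 2 := by push_cast; ring
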